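/- Let n > 0 and κ > 0 be real numbers, let T > 0, and let α : [0,T] → ℝ be a nonnegative differentiable function satisfying α'(t) ≥ κ·α(t) + α(t)²/n for all t ∈ [0,T]. Then for every t ∈ [0,T], α(t) ≤ n·κ·α(T) / ( e^{κ(T−t)}·(n·κ + α(T)) − α(T) ). (Note that the denominator is at least n·κ > 0, so the bound is well defined.) -/

import Mathlib

open Set

/-- A Gronwall-type bound: if `α ≥ 0` is differentiable on `[0,T]` (one-sided
derivatives at the endpoints) and satisfies `α' ≥ κ·α + α²/n`, then for `t ∈ [0,T]`,
`α(t) ≤ n·κ·α(T) / ( e^{κ(T−t)}·(n·κ + α(T)) − α(T) )`. -/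
theorem ode_comparison_bound (n κ T : ℝ) (hn : 0 < n) (hκ : 0 < κ) (hT : 0 < T)
    (α α' : ℝ → ℝ)
    (hderiv : ∀ t ∈ Icc 0 T, HasDerivWithinAt α (α' t) (Icc 0 T) t)
    (hpos : ∀ t ∈ Icc 0 T, 0 ≤ α t)
    (hineq : ∀ t ∈ Icc 0 T, κ * α t + (α t) ^ 2 / n ≤ α' t) :
    ∀ t ∈ Icc 0 T,
      α t ≤ n * κ * α T / (Real.exp (κ * (T - t)) * (n * κ + α T) - α T) := by
  have hnκ : 0 < n * κ := mul_pos hn hκ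
  -- denominator positivity
  set g : ℝ → ℝ := fun t => Real.exp (-κ * t) * α t / (n * κ + α t) with hg
  set g' : ℝ → ℝ := fun t =>
    ((-κ * Real.exp (-κ * t) * α t + Real.exp (-κ * t) * α' t) * (n * κ + α t)
      - Real.exp (-κ * t) * α t * α' t) / (n * κ + α t) ^ 2 with hg'
  have hden : ∀ t ∈ Icc (0:ℝ) T, 0 < n * κ + α t := fun t ht =>
    lt_of_lt_of_le hnκ (by linarith [hpos t ht])
  have hgd : ∀ t ∈ Icc (0:ℝ) T, HasDerivWithinAt g (g' t) (Icc 0 T) t := by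
    intro t ht
    have h1 : HasDerivWithinAt (fun t => Real.exp (-κ * t) * α t)
        (-κ * Real.exp (-κ * t) * α t + Real.exp (-κ * t) * α' t) (Icc 0 T) t := by
      have he : HasDerivWithinAt (fun t => Real.exp (-κ * t)) (-κ * Real.exp (-κ * t))
          (Icc 0 T) t := by
        have := ((Real.hasDerivAt_exp (-κ * t)).comp t
          ((hasDerivAt_id t).const_mul (-κ))).hasDerivWithinAt (s := Icc 0 T)
        exact this.congr_deriv (by ring)
      exact (he.mul (hderiv t ht)).congr_deriv (by ring)
    have h2 : HasDerivWithinAt (fun t => n * κ + α t) (α' t) (Icc 0 T) t :=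
      (hderiv t ht).const_add _
    exact h1.div h2 (ne_of_gt (hden t ht))
  have hmono : MonotoneOn g (Icc 0 T) := by
    apply monotoneOn_of_hasDerivWithinAt_nonneg (convex_Icc 0 T)
      (fun t ht => (hgd t ht).continuousWithinAt)
      (f' := g')
    · intro x hx
      rw [interior_Icc] at hx
      exact (hgd x (Ioo_subset_Icc_self hx)).mono
        (by rw [interior_Icc]; exact Ioo_subset_Icc_self)
    · intro x hx
      rw [interior_Icc] at hx
      have hx' := Ioo_subset_Icc_self hx
      have hi := hineq x hx'
      have ha := hpos x hx'
      have hd := hden x hx'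
      have he : 0 < Real.exp (-κ * x) := Real.exp_pos _
      apply div_nonneg _ (sq_nonneg _)
      have key : κ * α x + (α x) ^ 2 / n ≤ α' x := hi
      have key2 : n * (κ * α x) + (α x) ^ 2 ≤ n * α' x := by
        have := mul_le_mul_of_nonneg_left key (le_of_lt hn)
        calc n * (κ * α x) + (α x) ^ 2 = n * (κ * α x + (α x)^2 / n) := by
              field_simp
          _ ≤ n * α' x := this
      nlinarith [mul_le_mul_of_nonneg_left key2 (mul_pos he hκ).le]
  intro t ht
  have hgle : g t ≤ g T := hmono ht (right_mem_Icc.mpr hT.le) ht.2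
  have hdt := hden t ht
  have hdT := hden T (right_mem_Icc.mpr hT.le)
  have hat := hpos t ht
  have haT := hpos T (right_mem_Icc.mpr hT.le)
  have hE : Real.exp (κ * (T - t)) = Real.exp (κ * T) * Real.exp (-κ * t) := by
    rw [← Real.exp_add]; ring_nf
  have hE1 : 1 ≤ Real.exp (κ * (T - t)) := by
    apply Real.one_le_exp; nlinarith [ht.2, hκ]
  have hD : 0 < Real.exp (κ * (T - t)) * (n * κ + α T) - α T := by nlinarith
  rw [le_div_iff₀ hD]
  -- from g t ≤ g T, clear denominators
  have hgle' : Real.exp (-κ * t) * α t * (n * κ + α T)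
      ≤ Real.exp (-κ * T) * α T * (n * κ + α t) := by
    have := (div_le_div_iff₀ hdt hdT).mp hgle
    linarith
  have heT : 0 < Real.exp (κ * T) := Real.exp_pos _
  have hmul := mul_le_mul_of_nonneg_left hgle' heT.le
  have hinv : Real.exp (κ * T) * Real.exp (-κ * T) = 1 := by
    rw [← Real.exp_add]; ring_nf; exact Real.exp_zero
  have h1 : Real.exp (κ * (T - t)) * (α t * (n * κ + α T)) ≤ α T * (n * κ + α t) := by
    rw [hE]
    calc Real.exp (κ * T) * Real.exp (-κ * t) * (α t * (n * κ + α T))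
        = Real.exp (κ * T) * (Real.exp (-κ * t) * α t * (n * κ + α T)) := by ring
      _ ≤ Real.exp (κ * T) * (Real.exp (-κ * T) * α T * (n * κ + α t)) := hmul
      _ = (Real.exp (κ * T) * Real.exp (-κ * T)) * (α T * (n * κ + α t)) := by ring
      _ = α T * (n * κ + α t) := by rw [hinv]; ring
  nlinarith [h1]
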